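/- Let G be a finite simple graph on vertex set {1,…,m}, f_1,…,f_m : ℝ^d → ℝ with Σ_i f_i(u_i) ≥ F* for all u_1,…,u_m ∈ ℝ^d (some F* ∈ ℝ), let μ_z ≥ 0, μ_y > 0, and let ℒ denote the augmented Lagrangian. Suppose for every t ≥ 1 the dual update y_{ij,i}^t = y_{ij,i}^{t−1} + μ_y(x_i^t − z_{ij}^t) holds for every ordered adjacent pair. Then for every t ≥ 1: ℒ(x^t, z^t, y^t) − F* ≥ (1/(2μ_y)) (‖y^t‖² − ‖y^{t−1}‖²), where ‖y^t‖² := Σ_i Σ_{j∈N_i} ‖y_{ij,i}^t‖²; consequently, for every T ≥ 1, Σ_{t=1}^T (ℒ(x^t, z^t, y^t) − F*) ≥ −(1/(2μ_y)) ‖y^0‖². -/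
import Mathlib


open Finset RealInnerProductSpace

lemma aux_inner_lb {E : Type*} [NormedAddCommGroup E] [InnerProductSpace ℝ E]
    (μy : ℝ) (hμy : 0 < μy) (a b v : E) (h : a = b + μy • v) :
    (1 / (2 * μy)) * (‖a‖ ^ 2 - ‖b‖ ^ 2) ≤ ⟪a, v⟫ := by
  have hv : v = (1 / μy) • (a - b) := by
    rw [h]
    rw [add_sub_cancel_left, smul_smul, one_div, inv_mul_cancel₀ hμy.ne', one_smul]
  have key : ⟪a, a - b⟫ = (‖a‖ ^ 2 - ‖b‖ ^ 2 + ‖a - b‖ ^ 2) / 2 := by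
    have hns := @norm_sub_sq_real E _ _ a b
    have h2 : ⟪a, a - b⟫ = ‖a‖ ^ 2 - ⟪a, b⟫ := by
      rw [inner_sub_right, real_inner_self_eq_norm_sq]
    rw [h2]; linarith
  rw [hv, real_inner_smul_right, key]
  have hsq : 0 ≤ ‖a - b‖ ^ 2 := sq_nonneg _
  have e : (1 / μy) * ((‖a‖ ^ 2 - ‖b‖ ^ 2 + ‖a - b‖ ^ 2) / 2)
      = 1 / (2 * μy) * (‖a‖ ^ 2 - ‖b‖ ^ 2) + (1 / (2 * μy)) * ‖a - b‖ ^ 2 := by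
    field_simp
    try ring
    try exact Or.inl trivial
  rw [e]
  have hpos : 0 ≤ (1 / (2 * μy)) * ‖a - b‖ ^ 2 := by positivity
  linarith

/-- Lower bound for the augmented Lagrangian along the dual ascent iterates:
for every `t ≥ 1`, `ℒ(xᵗ, zᵗ, yᵗ) − F* ≥ (1/(2μ_y))(‖yᵗ‖² − ‖y^{t−1}‖²)`, and
consequently `Σ_{t=1}^T (ℒ(xᵗ, zᵗ, yᵗ) − F*) ≥ −(1/(2μ_y))‖y⁰‖²`. -/
theorem stmt_14 (m d : ℕ) (G : SimpleGraph (Fin m)) [DecidableRel G.Adj]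
    (f : Fin m → EuclideanSpace ℝ (Fin d) → ℝ)
    (Fstar : ℝ) (hFstar : ∀ u : Fin m → EuclideanSpace ℝ (Fin d), Fstar ≤ ∑ i, f i (u i))
    (μz μy : ℝ) (hμz : 0 ≤ μz) (hμy : 0 < μy)
    (x : ℕ → Fin m → EuclideanSpace ℝ (Fin d))
    (z y : ℕ → Fin m → Fin m → EuclideanSpace ℝ (Fin d))
    (hyupd : ∀ t, 1 ≤ t → ∀ i j, G.Adj i j →
      y t i j = y (t - 1) i j + μy • (x t i - z t i j))
    (Lag : (Fin m → EuclideanSpace ℝ (Fin d)) →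
      (Fin m → Fin m → EuclideanSpace ℝ (Fin d)) →
      (Fin m → Fin m → EuclideanSpace ℝ (Fin d)) → ℝ)
    (hLag : ∀ x' z' y', Lag x' z' y'
      = ∑ i, f i (x' i)
        + ∑ i, ∑ j ∈ G.neighborFinset i, ⟪y' i j, x' i - z' i j⟫
        + (μz / 2) * ∑ i, ∑ j ∈ G.neighborFinset i, ‖x' i - z' i j‖ ^ 2) :
    (∀ t, 1 ≤ t →
      (1 / (2 * μy)) * ((∑ i, ∑ j ∈ G.neighborFinset i, ‖y t i j‖ ^ 2)
          - ∑ i, ∑ j ∈ G.neighborFinset i, ‖y (t - 1) i j‖ ^ 2)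
        ≤ Lag (x t) (z t) (y t) - Fstar)
    ∧ (∀ T, 1 ≤ T →
      -(1 / (2 * μy)) * ∑ i, ∑ j ∈ G.neighborFinset i, ‖y 0 i j‖ ^ 2
        ≤ ∑ t ∈ Finset.Icc 1 T, (Lag (x t) (z t) (y t) - Fstar)) := by
  set g : ℕ → ℝ := fun t => ∑ i, ∑ j ∈ G.neighborFinset i, ‖y t i j‖ ^ 2 with hg
  have hgnn : ∀ t, 0 ≤ g t := fun t =>
    Finset.sum_nonneg fun i _ => Finset.sum_nonneg fun j _ => sq_nonneg _
  have part1 : ∀ t, 1 ≤ t →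
      (1 / (2 * μy)) * (g t - g (t - 1)) ≤ Lag (x t) (z t) (y t) - Fstar := by
    intro t ht
    rw [hLag]
    have hinner : (1 / (2 * μy)) * (g t - g (t - 1))
        ≤ ∑ i, ∑ j ∈ G.neighborFinset i, ⟪y t i j, x t i - z t i j⟫ := by
      rw [hg]
      simp only [mul_sub, ← Finset.sum_sub_distrib, Finset.mul_sum]
      refine Finset.sum_le_sum fun i _ => Finset.sum_le_sum fun j hj => ?_
      have hadj : G.Adj i j := (SimpleGraph.mem_neighborFinset G i j).mp hj
      have := aux_inner_lb μy hμy (y t i j) (y (t - 1) i j) (x t i - z t i j)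
        (hyupd t ht i j hadj)
      linarith [this]
    have hf : Fstar ≤ ∑ i, f i (x t i) := hFstar _
    have hpen : 0 ≤ (μz / 2) * ∑ i, ∑ j ∈ G.neighborFinset i, ‖x t i - z t i j‖ ^ 2 := by
      apply mul_nonneg (by linarith)
      exact Finset.sum_nonneg fun i _ => Finset.sum_nonneg fun j _ => sq_nonneg _
    linarith
  refine ⟨part1, fun T hT => ?_⟩
  have htel : ∀ T, ∑ t ∈ Finset.Icc 1 T, (1 / (2 * μy)) * (g t - g (t - 1))
      = (1 / (2 * μy)) * (g T - g 0) := by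
    intro T
    induction T with
    | zero => simp
    | succ n ih =>
      rw [Finset.sum_Icc_succ_top (by omega : 1 ≤ n + 1), ih]
      simp only [Nat.add_sub_cancel]
      ring
  calc -(1 / (2 * μy)) * g 0 ≤ (1 / (2 * μy)) * (g T - g 0) := by
        have h1 : (0:ℝ) ≤ 1 / (2 * μy) := by positivity
        nlinarith [hgnn T]
    _ = ∑ t ∈ Finset.Icc 1 T, (1 / (2 * μy)) * (g t - g (t - 1)) := (htel T).symm
    _ ≤ ∑ t ∈ Finset.Icc 1 T, (Lag (x t) (z t) (y t) - Fstar) := by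
        refine Finset.sum_le_sum fun t ht => part1 t ?_
        exact (Finset.mem_Icc.mp ht).1
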